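/- Let S = [[S11, S12],[S21, S22]] be a block real matrix with ker S11 = {0} and assume that every d1 with d1ᵀ S11 = 0 also satisfies d1ᵀ S12 = 0. Then for any c2 ∈ ker(S22 - S21 S11⁺ S12), the vector c = (-S11⁺ S12 c2, c2) satisfies S c = 0; in particular (I - S11 S11⁺) S12 c2 = 0. -/
import Mathlib


open Matrix

/-- With `ker S11 = {0}` and every left null vector of `S11`
annihilating `S12`, for any `c2 ∈ ker (S22 - S21 S11⁺ S12)` the vector
`c = (-S11⁺ S12 c2, c2)` satisfies `S c = 0`; in particular
`(I - S11 S11⁺) S12 c2 = 0`. -/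
theorem stmt2 {m1 m2 n1 n2 : ℕ}
    (S11 : Matrix (Fin m1) (Fin n1) ℝ) (S12 : Matrix (Fin m1) (Fin n2) ℝ)
    (S21 : Matrix (Fin m2) (Fin n1) ℝ) (S22 : Matrix (Fin m2) (Fin n2) ℝ)
    (S11p : Matrix (Fin n1) (Fin m1) ℝ)
    (hp1 : S11 * S11p * S11 = S11)
    (hp2 : S11p * S11 * S11p = S11p)
    (hp3 : (S11 * S11p)ᵀ = S11 * S11p)
    (hp4 : (S11p * S11)ᵀ = S11p * S11)
    (hker : ∀ c1 : Fin n1 → ℝ, S11 *ᵥ c1 = 0 → c1 = 0)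
    (hcoker : ∀ d1 : Fin m1 → ℝ, d1 ᵥ* S11 = 0 → d1 ᵥ* S12 = 0)
    (c2 : Fin n2 → ℝ) (hc2 : (S22 - S21 * S11p * S12) *ᵥ c2 = 0) :
    (Matrix.fromBlocks S11 S12 S21 S22) *ᵥ
        (Sum.elim (-((S11p * S12) *ᵥ c2)) c2) = 0 ∧
      (1 - S11 * S11p) *ᵥ (S12 *ᵥ c2) = 0 := by
  have hM : (1 - S11 * S11p) * S12 = 0 := by
    ext i j
    have h1 : ((1 - S11 * S11p) * S11) = 0 := by
      rw [Matrix.sub_mul, Matrix.one_mul, hp1, sub_self]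
    have h2 : (((1 - S11 * S11p : Matrix (Fin m1) (Fin m1) ℝ)) i) ᵥ* S11 = 0 := by
      rw [← Matrix.mul_apply_eq_vecMul, h1]; rfl
    have h3 := hcoker _ h2
    rw [Matrix.mul_apply_eq_vecMul, h3]
    rfl
  have key : (1 - S11 * S11p) *ᵥ (S12 *ᵥ c2) = 0 := by
    rw [Matrix.mulVec_mulVec, hM, Matrix.zero_mulVec]
  refine ⟨?_, key⟩
  ext (i | i)
  · have := congrFun key i
    simp only [Matrix.sub_mulVec, Matrix.one_mulVec, Pi.sub_apply, Pi.zero_apply,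
      sub_eq_zero] at this
    simp [Matrix.fromBlocks_mulVec, Matrix.mulVec_neg, Matrix.mulVec_mulVec,
      ← Matrix.mul_assoc, this, ← Matrix.mulVec_mulVec]
  · have := congrFun hc2 i
    simp only [Matrix.sub_mulVec, Pi.sub_apply, Pi.zero_apply, sub_eq_zero] at this
    simp [Matrix.fromBlocks_mulVec, Matrix.mulVec_neg, Matrix.mulVec_mulVec,
      ← Matrix.mul_assoc, ← this]
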